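/- Let V be a finite-dimensional complex vector space of dimension n and T : V → V a linear operator. For each eigenvalue λ of T, let V_λ = ker (T − λ)^n denote the generalized eigenspace. Then every linear operator S commuting with T maps each V_λ into itself, and the map S ↦ (S|_{V_λ})_{λ ∈ Spec(T)} is an algebra isomorphism from the centralizer algebra c(T) onto the product ∏_{λ ∈ Spec(T)} c(T|_{V_λ}) of the centralizer algebras of the restrictions T|_{V_λ} ∈ End(V_λ). -/

import Mathlib

set_option synthInstance.maxHeartbeats 400000
set_option maxHeartbeats 1000000

/-- The centralizer algebra `c(T)` decomposes as the product of the centralizer algebras of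
the restrictions of `T` to the generalized eigenspaces `V_λ = ker (T - λ)^n`, `n = dim V`:
every operator commuting with `T` preserves each generalized eigenspace, and restriction
gives an algebra isomorphism `c(T) ≃ ∏_{λ ∈ Spec(T)} c(T|_{V_λ})`. -/
theorem stmt7 (V : Type*) [AddCommGroup V] [Module ℂ V] [FiniteDimensional ℂ V]
    (T : Module.End ℂ V)
    (G : ℂ → Submodule ℂ V)
    (hG : ∀ μ : ℂ, G μ = LinearMap.ker ((T - μ • 1) ^ Module.finrank ℂ V))
    (hT : ∀ μ : ℂ, ∀ v ∈ G μ, T v ∈ G μ) :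
    (∀ S : Module.End ℂ V, Commute S T → ∀ μ : ℂ, ∀ v ∈ G μ, S v ∈ G μ) ∧
    ∃ e : Subalgebra.centralizer ℂ {T} ≃ₐ[ℂ]
        (Π μ : {μ : ℂ // Module.End.HasEigenvalue T μ},
          Subalgebra.centralizer ℂ
            ({LinearMap.restrict T (hT μ.1)} : Set (Module.End ℂ (G μ.1)))),
      ∀ (S : Subalgebra.centralizer ℂ ({T} : Set (Module.End ℂ V)))
        (μ : {μ : ℂ // Module.End.HasEigenvalue T μ}) (v : G μ.1),
        ((e S μ : Module.End ℂ (G μ.1)) v : V) = (S : Module.End ℂ V) (v : V) := by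
  classical
  -- Part 1: any `S` commuting with `T` preserves each `G μ`.
  have part1 : ∀ S : Module.End ℂ V, Commute S T → ∀ μ : ℂ, ∀ v ∈ G μ, S v ∈ G μ := by
    intro S hST μ v hv
    rw [hG] at hv ⊢
    rw [LinearMap.mem_ker] at hv ⊢
    have hc : Commute S ((T - μ • 1) ^ Module.finrank ℂ V) :=
      (hST.sub_right ((Commute.one_right S).smul_right μ)).pow_right _
    calc ((T - μ • 1) ^ Module.finrank ℂ V) (S v)
        = (((T - μ • 1) ^ Module.finrank ℂ V) * S) v := rfl
      _ = (S * ((T - μ • 1) ^ Module.finrank ℂ V)) v := by rw [hc.eq]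
      _ = S (((T - μ • 1) ^ Module.finrank ℂ V) v) := rfl
      _ = 0 := by rw [hv, map_zero]
  refine ⟨part1, ?_⟩
  set ι := {μ : ℂ // Module.End.HasEigenvalue T μ} with hι
  -- `G μ` is the maximal generalized eigenspace.
  have hGE : ∀ μ : ℂ, G μ = T.genEigenspace μ (Module.finrank ℂ V : ℕ) := by
    intro μ; rw [hG, Module.End.genEigenspace_nat]
  have hmax : ∀ μ : ℂ, G μ = T.maxGenEigenspace μ := by
    intro μ
    refine le_antisymm ?_ ?_
    · rw [hGE, Module.End.maxGenEigenspace]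
      exact (T.genEigenspace μ).monotone le_top
    · rw [hGE]
      exact Module.End.genEigenspace_le_genEigenspace_finrank T μ ⊤
  have hbot : ∀ μ : ℂ, ¬ T.HasEigenvalue μ → G μ = ⊥ := by
    intro μ h
    by_contra hne
    have : T.HasUnifEigenvalue μ (Module.finrank ℂ V : ℕ) := by
      rw [Module.End.HasUnifEigenvalue, ← hGE]; exact hne
    exact h (this.lt zero_lt_one)
  have hsup : ⨆ μ : ι, G μ.1 = ⊤ := by
    have h1 : ⨆ μ : ι, G μ.1 = ⨆ μ : ℂ, ⨆ _ : T.HasEigenvalue μ, G μ := by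
      rw [iSup_subtype]
    have h2 : ∀ μ : ℂ, (⨆ _ : T.HasEigenvalue μ, G μ) = G μ := by
      intro μ
      by_cases h : T.HasEigenvalue μ
      · rw [iSup_pos h]
      · rw [iSup_neg h, hbot μ h]
    rw [h1]
    simp_rw [h2, hmax]
    exact Module.End.iSup_maxGenEigenspace_eq_top T
  have hind : iSupIndep (fun μ : ι => G μ.1) := by
    have heq : (fun μ : ι => G μ.1) =
        (fun μ : ι => T.genEigenspace μ.1 (Module.finrank ℂ V : ℕ)) :=
      funext fun μ => hGE μ.1
    rw [heq]
    exact (T.independent_genEigenspace (Module.finrank ℂ V : ℕ)).comp Subtype.val_injective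
  have hI : DirectSum.IsInternal (fun μ : ι => G μ.1) :=
    DirectSum.isInternal_submodule_of_iSupIndep_of_iSup_eq_top hind hsup
  -- extensionality: operators agreeing on each `G μ`, `μ` eigenvalue, are equal
  have ext_lemma : ∀ A B : Module.End ℂ V, (∀ μ : ι, ∀ v ∈ G μ.1, A v = B v) → A = B := by
    intro A B h
    ext v
    have hv : v ∈ ⨆ μ : ι, G μ.1 := by rw [hsup]; trivial
    refine Submodule.iSup_induction (motive := fun x => A x = B x) _ hv (fun μ x hx => h μ x hx)
      (by simp) (fun x y hx hy => by
        show A (x + y) = B (x + y)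
        rw [map_add, map_add]
        exact congrArg₂ (· + ·) hx hy)
  -- commutation for members of the centralizer
  have hcomm : ∀ S : Subalgebra.centralizer ℂ ({T} : Set (Module.End ℂ V)),
      Commute (S : Module.End ℂ V) T := by
    intro S
    have := (Subalgebra.mem_centralizer_iff ℂ).mp S.2 T rfl
    exact this.symm
  -- the forward algebra homomorphism
  let φfun : Subalgebra.centralizer ℂ ({T} : Set (Module.End ℂ V)) →
      Π μ : ι, Subalgebra.centralizer ℂ
        ({LinearMap.restrict T (hT μ.1)} : Set (Module.End ℂ (G μ.1))) := fun S μ =>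
    ⟨LinearMap.restrict (S : Module.End ℂ V) (part1 S (hcomm S) μ.1), by
      rw [Subalgebra.mem_centralizer_iff]
      rintro g (rfl : g = _)
      ext v
      simp only [Module.End.mul_apply, LinearMap.restrict_coe_apply]
      exact (congrFun (congrArg DFunLike.coe (hcomm S).eq) (v : V)).symm⟩
  have φfun_apply : ∀ S μ (v : G μ.1),
      ((φfun S μ : Module.End ℂ (G μ.1)) v : V) = (S : Module.End ℂ V) (v : V) := by
    intro S μ v
    simp [φfun, LinearMap.restrict_coe_apply]
  let φ : Subalgebra.centralizer ℂ ({T} : Set (Module.End ℂ V)) →ₐ[ℂ]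
      Π μ : ι, Subalgebra.centralizer ℂ
        ({LinearMap.restrict T (hT μ.1)} : Set (Module.End ℂ (G μ.1))) :=
    { toFun := φfun
      map_one' := by
        funext μ; apply Subtype.ext; ext v
        simp [φfun, LinearMap.restrict_coe_apply]
      map_mul' := fun S₁ S₂ => by
        funext μ; apply Subtype.ext; ext v
        simp [φfun, LinearMap.restrict_coe_apply, Module.End.mul_apply]
      map_zero' := by
        funext μ; apply Subtype.ext; ext v
        simp [φfun, LinearMap.restrict_coe_apply]
      map_add' := fun S₁ S₂ => by
        funext μ; apply Subtype.ext; ext v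
        simp [φfun, LinearMap.restrict_coe_apply]
      commutes' := fun r => by
        funext μ; apply Subtype.ext; ext v
        simp [φfun, LinearMap.restrict_coe_apply, Algebra.algebraMap_eq_smul_one] }
  have hinj : Function.Injective φ := by
    intro S₁ S₂ h
    apply Subtype.ext
    apply ext_lemma
    intro μ v hv
    have heq : φfun S₁ μ = φfun S₂ μ := congrFun h μ
    have h2 : ((φfun S₁ μ : Module.End ℂ (G μ.1)) ⟨v, hv⟩ : V)
        = ((φfun S₂ μ : Module.End ℂ (G μ.1)) ⟨v, hv⟩ : V) := by
      rw [heq]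
    rwa [φfun_apply, φfun_apply] at h2
  have hsurj : Function.Surjective φ := by
    intro F
    -- assemble an operator from the components using the direct sum decomposition
    let e0 : DirectSum ι (fun μ : ι => G μ.1) ≃ₗ[ℂ] V :=
      LinearEquiv.ofBijective (DirectSum.coeLinearMap (fun μ : ι => G μ.1)) hI
    let Smap : DirectSum ι (fun μ : ι => G μ.1) →ₗ[ℂ] DirectSum ι (fun μ : ι => G μ.1) :=
      DirectSum.toModule ℂ ι _ (fun μ =>
        (DirectSum.lof ℂ ι (fun μ : ι => G μ.1) μ) ∘ₗ (F μ : Module.End ℂ (G μ.1)))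
    let S0 : Module.End ℂ V := e0.toLinearMap ∘ₗ Smap ∘ₗ e0.symm.toLinearMap
    have he0 : ∀ (μ : ι) (x : G μ.1), e0 (DirectSum.lof ℂ ι (fun μ : ι => G μ.1) μ x) = x := by
      intro μ x
      show DirectSum.coeLinearMap (fun μ : ι => G μ.1) (DirectSum.lof ℂ ι _ μ x) = x
      rw [DirectSum.lof_eq_of, DirectSum.coeLinearMap_of]
    have claim : ∀ (μ : ι) (v : V) (hv : v ∈ G μ.1),
        S0 v = ((F μ : Module.End ℂ (G μ.1)) ⟨v, hv⟩ : V) := by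
      intro μ v hv
      have h2 : e0.symm v = DirectSum.lof ℂ ι (fun μ : ι => G μ.1) μ ⟨v, hv⟩ :=
        (LinearEquiv.symm_apply_eq e0).mpr (he0 μ ⟨v, hv⟩).symm
      show e0 (Smap (e0.symm v)) = _
      rw [h2]
      have h3 : Smap (DirectSum.lof ℂ ι (fun μ : ι => G μ.1) μ ⟨v, hv⟩)
          = DirectSum.lof ℂ ι (fun μ : ι => G μ.1) μ
              ((F μ : Module.End ℂ (G μ.1)) ⟨v, hv⟩) := by
        show DirectSum.toModule ℂ ι _ _ ((DirectSum.lof ℂ ι (fun μ : ι => G μ.1) μ) ⟨v, hv⟩) = _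
        rw [DirectSum.toModule_lof]
        rfl
      rw [h3, he0]
    have hS0T : Commute S0 T := by
      have : S0 * T = T * S0 := by
        apply ext_lemma
        intro μ v hv
        have hTv : T v ∈ G μ.1 := hT μ.1 v hv
        have hFμ := (Subalgebra.mem_centralizer_iff ℂ).mp (F μ).2
          (LinearMap.restrict T (hT μ.1)) rfl
        have hFc : ∀ x : G μ.1,
            (LinearMap.restrict T (hT μ.1)) ((F μ : Module.End ℂ (G μ.1)) x)
              = (F μ : Module.End ℂ (G μ.1)) ((LinearMap.restrict T (hT μ.1)) x) := by
          intro x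
          exact congrFun (congrArg DFunLike.coe hFμ) x
        show S0 (T v) = T (S0 v)
        rw [claim μ (T v) hTv, claim μ v hv]
        have h4 : (⟨T v, hTv⟩ : G μ.1) = (LinearMap.restrict T (hT μ.1)) ⟨v, hv⟩ := by
          apply Subtype.ext
          rw [LinearMap.restrict_coe_apply]
        rw [h4, ← hFc ⟨v, hv⟩, LinearMap.restrict_coe_apply]
      exact this
    have hS0mem : S0 ∈ Subalgebra.centralizer ℂ ({T} : Set (Module.End ℂ V)) := by
      rw [Subalgebra.mem_centralizer_iff]
      rintro g (rfl : g = _)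
      exact hS0T.eq.symm
    refine ⟨⟨S0, hS0mem⟩, ?_⟩
    funext μ
    apply Subtype.ext
    ext v
    show ((φfun ⟨S0, hS0mem⟩ μ : Module.End ℂ (G μ.1)) v : V)
      = ((F μ : Module.End ℂ (G μ.1)) v : V)
    rw [φfun_apply]
    exact claim μ (v : V) v.2
  refine ⟨AlgEquiv.ofBijective φ ⟨hinj, hsurj⟩, ?_⟩
  intro S μ v
  exact φfun_apply S μ v
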